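/- Let V be a 6-dimensional complex vector space, vol : ⋀⁶V → ℂ a fixed linear isomorphism, and (α, β)_V := vol(α ∧ β) the induced symplectic form on ⋀³V. For every nonzero v ∈ V there exists a 10-dimensional subspace A ⊂ ⋀³V with (α, β)_V = 0 for all α, β ∈ A (i.e. A is Lagrangian) and A ∩ F_v = {0}. -/

import Mathlib

open ExteriorAlgebra

section Aux

variable {V : Type*} [AddCommGroup V] [Module ℂ V]

/-- The basis monomial of the exterior algebra attached to an `n`-element
subset of `Fin 6`. -/
noncomputable def bmon (b : Module.Basis (Fin 6) ℂ V) (n : ℕ)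
    (T : {T : Finset (Fin 6) // T.card = n}) : ExteriorAlgebra ℂ V :=
  ιMulti ℂ n fun i => b (T.1.orderEmbOfFin T.2 i)

/-- The dual functional to `bmon b n T`. -/
noncomputable def bfun (b : Module.Basis (Fin 6) ℂ V) (n : ℕ)
    (T : {T : Finset (Fin 6) // T.card = n}) : ExteriorAlgebra ℂ V →ₗ[ℂ] ℂ :=
  liftAlternating (Function.update (fun i => (0 : V [⋀^Fin i]→ₗ[ℂ] ℂ)) n
    ((Matrix.detRowAlternating).compLinearMap
      (LinearMap.pi fun j : Fin n => b.coord (T.1.orderEmbOfFin T.2 j))))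

theorem bfun_apply (b : Module.Basis (Fin 6) ℂ V) (n : ℕ)
    (T : {T : Finset (Fin 6) // T.card = n}) (w : Fin n → V) :
    bfun b n T (ιMulti ℂ n w) =
      Matrix.det (Matrix.of fun i j => b.coord (T.1.orderEmbOfFin T.2 j) (w i)) := by
  rw [bfun, liftAlternating_apply_ιMulti, Function.update_self]
  rfl

theorem bfun_bmon (b : Module.Basis (Fin 6) ℂ V) (n : ℕ)
    (S T : {T : Finset (Fin 6) // T.card = n}) :
    bfun b n T (bmon b n S) = if S = T then 1 else 0 := by
  rw [bmon, bfun_apply]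
  by_cases h : S = T
  · subst h
    rw [if_pos rfl]
    have : (Matrix.of fun i j => b.coord (S.1.orderEmbOfFin S.2 j) (b (S.1.orderEmbOfFin S.2 i)))
        = (1 : Matrix (Fin n) (Fin n) ℂ) := by
      ext i j
      rw [Matrix.of_apply, Module.Basis.coord_apply, Module.Basis.repr_self, Matrix.one_apply,
        Finsupp.single_apply]
      by_cases hij : i = j
      · simp [hij]
      · rw [if_neg (fun hh => hij ((S.1.orderEmbOfFin S.2).injective hh)), if_neg hij]
    rw [this, Matrix.det_one]
  · rw [if_neg h]
    have hTS : ¬ T.1 ⊆ S.1 := by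
      intro hsub
      exact h (Subtype.ext (Finset.eq_of_subset_of_card_le hsub (by rw [S.2, T.2])).symm)
    obtain ⟨a, haT, haS⟩ := Finset.not_subset.mp hTS
    have : a ∈ Set.range (T.1.orderEmbOfFin T.2) := by
      rw [Finset.range_orderEmbOfFin]; exact haT
    obtain ⟨j0, hj0⟩ := this
    apply Matrix.det_eq_zero_of_column_eq_zero j0
    intro i
    rw [Matrix.of_apply, hj0, Module.Basis.coord_apply, Module.Basis.repr_self, Finsupp.single_apply,
      if_neg]
    intro hh
    exact haS (hh ▸ Finset.orderEmbOfFin_mem S.1 S.2 i)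

theorem bmon_li (b : Module.Basis (Fin 6) ℂ V) (n : ℕ) :
    LinearIndependent ℂ (bmon b n) := by
  apply Fintype.linearIndependent_iff.mpr
  intro g hg T
  have h := congrArg (bfun b n T) hg
  rw [map_sum, map_zero] at h
  simp only [map_smul, bfun_bmon, smul_eq_mul, mul_ite, mul_one, mul_zero] at h
  rwa [Finset.sum_ite_eq' Finset.univ T g, if_pos (Finset.mem_univ T)] at h

theorem my_iota_mul {m n : ℕ} (u : Fin m → V) (w : Fin n → V) :
    ιMulti ℂ m u * ιMulti ℂ n w = ιMulti ℂ (m + n) (Fin.append u w) := by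
  rw [ιMulti_apply, ιMulti_apply, ιMulti_apply, List.ofFn_add, List.prod_append]
  simp [Fin.append_left, Fin.append_right]

theorem my_iota_cons {n : ℕ} (x : V) (w : Fin n → V) :
    ι ℂ x * ιMulti ℂ n w = ιMulti ℂ (n + 1) (Fin.cons x w) := by
  rw [ιMulti_succ_apply]
  congr 1

end Aux

theorem orderEmb_insert_zero {S : Finset (Fin 6)} (h3 : S.card = 3) (h0 : 0 ∉ S)
    (h4 : (insert 0 S).card = 4) :
    ⇑((insert 0 S).orderEmbOfFin h4) = Fin.cons 0 fun j => S.orderEmbOfFin h3 j := by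
  refine (Finset.orderEmbOfFin_unique h4 ?_ ?_).symm
  · intro i
    refine Fin.cases ?_ (fun j => ?_) i
    · rw [Fin.cons_zero]; exact Finset.mem_insert_self _ _
    · rw [Fin.cons_succ]; exact Finset.mem_insert_of_mem (Finset.orderEmbOfFin_mem _ _ _)
  · intro i j hij
    rcases Fin.eq_zero_or_eq_succ j with rfl | ⟨jp, rfl⟩
    · exact absurd hij (Fin.not_lt_zero i)
    rcases Fin.eq_zero_or_eq_succ i with rfl | ⟨ip, rfl⟩
    · rw [Fin.cons_zero, Fin.cons_succ]
      exact Fin.pos_of_ne_zero fun hh =>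
        h0 (hh ▸ Finset.orderEmbOfFin_mem _ _ _)
    · rw [Fin.cons_succ, Fin.cons_succ]
      exact (S.orderEmbOfFin h3).strictMono (by exact_mod_cast Fin.succ_lt_succ_iff.mp hij)

theorem exists_basis_head {V : Type*} [AddCommGroup V] [Module ℂ V]
    [FiniteDimensional ℂ V] (hdim : Module.finrank ℂ V = 6) (v : V) (hv : v ≠ 0) :
    ∃ b : Module.Basis (Fin 6) ℂ V, b 0 = v := by
  classical
  have hsing : LinearIndepOn ℂ id ({v} : Set V) := (linearIndepOn_singleton_iff ℂ).mpr hv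
  let B := Module.Basis.extend hsing
  haveI : Fintype (hsing.extend (Set.subset_univ _)) := FiniteDimensional.fintypeBasisIndex B
  have hcard : Fintype.card (hsing.extend (Set.subset_univ _)) = 6 := by
    rw [← Module.finrank_eq_card_basis B, hdim]
  have hvmem : v ∈ hsing.extend (Set.subset_univ _) :=
    hsing.subset_extend _ (Set.mem_singleton v)
  let e : (hsing.extend (Set.subset_univ _)) ≃ Fin 6 := Fintype.equivFinOfCardEq hcard
  let e' := e.trans (Equiv.swap (e ⟨v, hvmem⟩) 0)
  refine ⟨B.reindex e', ?_⟩
  rw [Module.Basis.reindex_apply]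
  have : e'.symm 0 = ⟨v, hvmem⟩ := by
    simp only [e', Equiv.symm_trans_apply, Equiv.symm_swap, Equiv.swap_apply_right,
      Equiv.symm_apply_apply]
  rw [this]
  exact Module.Basis.extend_apply_self hsing _


/-- The `k`-th exterior power of `V`, realized as a submodule of the exterior
algebra of `V`. -/
noncomputable def extPow (V : Type*) [AddCommGroup V] [Module ℂ V] (k : ℕ) :
    Submodule ℂ (ExteriorAlgebra ℂ V) :=
  LinearMap.range (ExteriorAlgebra.ι ℂ : V →ₗ[ℂ] ExteriorAlgebra ℂ V) ^ k

/-- Given a linear functional `vol` on `⋀⁶V`, the pairing `(α, β) ↦ vol (α ∧ β)`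
on `⋀³V`. -/
noncomputable def wedgeForm (V : Type*) [AddCommGroup V] [Module ℂ V]
    (vol : (extPow V 6) →ₗ[ℂ] ℂ) (α β : ExteriorAlgebra ℂ V)
    (hα : α ∈ extPow V 3) (hβ : β ∈ extPow V 3) : ℂ :=
  vol ⟨α * β, by
    have h : extPow V 6 = extPow V 3 * extPow V 3 := by
      unfold extPow
      rw [show (6 : ℕ) = 3 + 3 from rfl, pow_add]
    rw [h]
    exact Submodule.mul_mem_mul hα hβ⟩

/-- `F_v := {α ∈ ⋀³V : v ∧ α = 0}`, as a submodule of the exterior algebra. -/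
noncomputable def Fv (V : Type*) [AddCommGroup V] [Module ℂ V] (v : V) :
    Submodule ℂ (ExteriorAlgebra ℂ V) :=
  extPow V 3 ⊓ LinearMap.ker (LinearMap.mulLeft ℂ (ExteriorAlgebra.ι ℂ v))

/-- Let `V` be a 6-dimensional complex vector space, `vol : ⋀⁶V ≃ ℂ` a volume
form and `(α,β)_V = vol(α ∧ β)` the induced symplectic form on `⋀³V`. For every
nonzero `v ∈ V` there exists a 10-dimensional Lagrangian subspace `A ⊆ ⋀³V`
with `A ∩ F_v = {0}`. -/
theorem exists_lagrangian_transverse_to_Fv (V : Type*) [AddCommGroup V]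
    [Module ℂ V] [FiniteDimensional ℂ V] (hdim : Module.finrank ℂ V = 6)
    (vol : (extPow V 6) →ₗ[ℂ] ℂ) (hvol : Function.Bijective vol)
    (v : V) (hv : v ≠ 0) :
    ∃ A : Submodule ℂ (ExteriorAlgebra ℂ V), A ≤ extPow V 3 ∧
      Module.finrank ℂ A = 10 ∧
      (∀ (α β : ExteriorAlgebra ℂ V) (hα : α ∈ A) (hβ : β ∈ A),
        ∀ (hA : A ≤ extPow V 3), wedgeForm V vol α β (hA hα) (hA hβ) = 0) ∧
      A ⊓ Fv V v = ⊥ := by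
  classical
  obtain ⟨b, hb0⟩ := exists_basis_head hdim v hv
  set 𝒮 : Finset (Finset (Fin 6)) := (Finset.univ.erase 0).powersetCard 3 with h𝒮
  have hmem : ∀ s : Finset (Fin 6), s ∈ 𝒮 →
      (s.card = 3 ∧ 0 ∉ s) ∧ s ⊆ Finset.univ.erase 0 := by
    intro s hs
    rw [h𝒮, Finset.mem_powersetCard] at hs
    exact ⟨⟨hs.2, fun h0 => (Finset.mem_erase.mp (hs.1 h0)).1 rfl⟩, hs.1⟩
  set fam : 𝒮 → ExteriorAlgebra ℂ V :=
    (fun s : 𝒮 => bmon b 3 ⟨s.1, (hmem s.1 s.2).1.1⟩) with hfam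
  set A : Submodule ℂ (ExteriorAlgebra ℂ V) := Submodule.span ℂ (Set.range fam) with hA
  have hA3 : A ≤ extPow V 3 := by
    rw [hA, Submodule.span_le]
    rintro x ⟨s, rfl⟩
    exact ιMulti_range ℂ 3 ⟨_, rfl⟩
  have famli : LinearIndependent ℂ fam := by
    apply (bmon_li b 3).comp
    intro s t hst
    exact Subtype.ext (congrArg (Subtype.val : {T : Finset (Fin 6) // T.card = 3} → _) hst)
  have hfr : Module.finrank ℂ A = 10 := by
    rw [hA, finrank_span_eq_card famli, Fintype.card_coe, h𝒮,
      Finset.card_powersetCard, Finset.card_erase_of_mem (Finset.mem_univ _),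
      Finset.card_univ, Fintype.card_fin]
    rfl
  have hprod : ∀ s t : 𝒮, fam s * fam t = 0 := by
    intro s t
    have hnd : ¬ Disjoint s.1 t.1 := by
      intro hd
      have hle : (s.1 ∪ t.1).card ≤ (Finset.univ.erase (0 : Fin 6)).card :=
        Finset.card_le_card (Finset.union_subset (hmem s.1 s.2).2 (hmem t.1 t.2).2)
      rw [Finset.card_union_of_disjoint hd, (hmem s.1 s.2).1.1, (hmem t.1 t.2).1.1,
        Finset.card_erase_of_mem (Finset.mem_univ _), Finset.card_univ,
        Fintype.card_fin] at hle
      omega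
    obtain ⟨a, has, hat⟩ := Finset.not_disjoint_iff.mp hnd
    obtain ⟨j1, hj1⟩ : a ∈ Set.range (s.1.orderEmbOfFin (hmem s.1 s.2).1.1) := by
      rw [Finset.range_orderEmbOfFin]; exact has
    obtain ⟨j2, hj2⟩ : a ∈ Set.range (t.1.orderEmbOfFin (hmem t.1 t.2).1.1) := by
      rw [Finset.range_orderEmbOfFin]; exact hat
    rw [hfam]
    show bmon b 3 _ * bmon b 3 _ = 0
    rw [bmon, bmon, my_iota_mul]
    apply AlternatingMap.map_eq_zero_of_eq _ _
      (i := Fin.castAdd 3 j1) (j := Fin.natAdd 3 j2)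
    · rw [Fin.append_left, Fin.append_right, hj1, hj2]
    · intro hcontra
      have := congrArg Fin.val hcontra
      simp only [Fin.coe_castAdd, Fin.coe_natAdd] at this
      omega
  have hmul : ∀ α ∈ A, ∀ β ∈ A, α * β = 0 := by
    have hAA : A * A ≤ ⊥ := by
      rw [hA, Submodule.span_mul_span, Submodule.span_le]
      rintro x hx
      rw [Set.mem_mul] at hx
      obtain ⟨y, hy, z, hz, rfl⟩ := hx
      obtain ⟨s, rfl⟩ := hy
      obtain ⟨t, rfl⟩ := hz
      simp only [SetLike.mem_coe, Submodule.mem_bot]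
      exact hprod s t
    intro α hα β hβ
    simpa using hAA (Submodule.mul_mem_mul hα hβ)
  refine ⟨A, hA3, hfr, ?_, ?_⟩
  · intro α β hα hβ hAle
    have h0 : α * β = 0 := hmul α hα β hβ
    unfold wedgeForm
    generalize_proofs hpf
    rw [show (⟨α * β, hpf⟩ : extPow V 6) = 0 from Subtype.ext (by simpa using h0), map_zero]
  · -- transversality
    have h4card : ∀ s : 𝒮, (insert (0 : Fin 6) s.1).card = 4 := by
      intro s
      rw [Finset.card_insert_of_notMem (hmem s.1 s.2).1.2, (hmem s.1 s.2).1.1]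
    set emb4 : 𝒮 → {T : Finset (Fin 6) // T.card = 4} :=
      (fun s => ⟨insert 0 s.1, h4card s⟩) with hemb4
    have key : ∀ s : 𝒮, ExteriorAlgebra.ι ℂ v * fam s = bmon b 4 (emb4 s) := by
      intro s
      rw [hfam]
      show ExteriorAlgebra.ι ℂ v * bmon b 3 _ = _
      rw [bmon, bmon, my_iota_cons]
      congr 1
      funext i
      have henum := congrFun (orderEmb_insert_zero (hmem s.1 s.2).1.1 (hmem s.1 s.2).1.2
        (h4card s)) i
      refine Fin.cases ?_ (fun j => ?_) i
      · rw [Fin.cons_zero]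
        have h0' := congrFun (orderEmb_insert_zero (hmem s.1 s.2).1.1 (hmem s.1 s.2).1.2
          (h4card s)) (0 : Fin 4)
        rw [Fin.cons_zero] at h0'
        rw [h0', hb0]
      · have h0' := congrFun (orderEmb_insert_zero (hmem s.1 s.2).1.1 (hmem s.1 s.2).1.2
          (h4card s)) (Fin.succ j)
        rw [Fin.cons_succ] at h0'
        rw [Fin.cons_succ, h0']
    have inj4 : Function.Injective emb4 := by
      intro s t hst
      have hval : insert (0 : Fin 6) s.1 = insert 0 t.1 := congrArg Subtype.val hst
      apply Subtype.ext
      rw [← Finset.erase_insert (hmem s.1 s.2).1.2, ← Finset.erase_insert (hmem t.1 t.2).1.2,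
        hval]
    have li4 : LinearIndependent ℂ (fun s : 𝒮 => bmon b 4 (emb4 s)) :=
      (bmon_li b 4).comp emb4 inj4
    rw [eq_bot_iff]
    intro x hx
    rw [Submodule.mem_inf] at hx
    obtain ⟨hxA, hxF⟩ := hx
    rw [Fv, Submodule.mem_inf, LinearMap.mem_ker, LinearMap.mulLeft_apply] at hxF
    have hx0 : ExteriorAlgebra.ι ℂ v * x = 0 := hxF.2
    rw [hA, Submodule.mem_span_range_iff_exists_fun] at hxA
    obtain ⟨c, hc⟩ := hxA
    have hsum : ∑ s : 𝒮, c s • bmon b 4 (emb4 s) = 0 := by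
      rw [← hx0, ← hc, Finset.mul_sum]
      refine Finset.sum_congr rfl fun s _ => ?_
      rw [mul_smul_comm, key s]
    have hc0 : ∀ s : 𝒮, c s = 0 := Fintype.linearIndependent_iff.mp li4 c hsum
    rw [Submodule.mem_bot, ← hc]
    simp [hc0]
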